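/- (Proposition on full vs. marginal OLS variances) Under the linear model Y_t = Σ_{k=0}^{t-1} β_k Z_{t-k} + ε_t with constant treatment probability p, the asymptotic variance of the full OLS estimator (T−K)^{-1} Var[Σ_{t=K+1}^T Z̃_{t-k}(Y_t − Σ_{ℓ=0}^K Z̃_{t-ℓ} w_ℓ τ_ℓ)] equals (T−K)^{-1} Σ_{t=K+1}^T Σ_{ℓ=K+1}^{t-1} β_ℓ² + (T−K)^{-1} (p(1−p))^{-1} Σ_{t=K+1}^T (p Σ_{k=0}^{t-1} β_k + ε_t)². -/

import Mathlib

/-- Expectation of a functional of a path of independent Bernoulli treatments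
`Z_0,...,Z_{T-1}` with `P(Z_t = true) = p_t` (times `≥ T` are padded with `false`). -/
noncomputable def Exp (T : ℕ) (p : ℕ → ℝ) (g : (ℕ → Bool) → ℝ) : ℝ :=
  ∑ z : Fin T → Bool,
    (∏ t : Fin T, if z t then p t.val else 1 - p t.val) *
      g (fun n => if h : n < T then z ⟨n, h⟩ else false)

/-- Normalized treatment indicator `Z̃_t = (Z_t - p_t)/(p_t(1-p_t))`. -/
noncomputable def ztil (p : ℕ → ℝ) (z : ℕ → Bool) (t : ℕ) : ℝ :=
  ((if z t then 1 else 0) - p t) / (p t * (1 - p t))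

/-- Design-based variance of a functional of the treatment path. -/
noncomputable def Var (T : ℕ) (p : ℕ → ℝ) (g : (ℕ → Bool) → ℝ) : ℝ :=
  Exp T p (fun z => (g z) ^ 2) - (Exp T p g) ^ 2

lemma exp_congr (T : ℕ) (p : ℕ → ℝ) {g h : (ℕ → Bool) → ℝ} (hg : ∀ z, g z = h z) :
    Exp T p g = Exp T p h := by
  simp only [Exp]
  exact Finset.sum_congr rfl fun z _ => by rw [hg]

lemma exp_sum {ι : Type*} (T : ℕ) (p : ℕ → ℝ) (F : Finset ι) (f : ι → (ℕ → Bool) → ℝ) :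
    Exp T p (fun z => ∑ i ∈ F, f i z) = ∑ i ∈ F, Exp T p (fun z => f i z) := by
  simp only [Exp, Finset.mul_sum]
  exact Finset.sum_comm

lemma exp_const_mul (T : ℕ) (p : ℕ → ℝ) (c : ℝ) (f : (ℕ → Bool) → ℝ) :
    Exp T p (fun z => c * f z) = c * Exp T p f := by
  simp only [Exp, Finset.mul_sum]
  exact Finset.sum_congr rfl fun z _ => by ring

lemma exp_add (T : ℕ) (p : ℕ → ℝ) (f g : (ℕ → Bool) → ℝ) :
    Exp T p (fun z => f z + g z) = Exp T p f + Exp T p g := by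
  simp only [Exp, mul_add]
  exact Finset.sum_add_distrib

lemma exp_prod (T : ℕ) (p : ℕ → ℝ) (f : ℕ → Bool → ℝ) :
    Exp T p (fun z => ∏ t ∈ Finset.range T, f t (z t))
      = ∏ t ∈ Finset.range T, (p t * f t true + (1 - p t) * f t false) := by
  simp only [Exp]
  have key : ∀ z : Fin T → Bool,
      (∏ t : Fin T, if z t then p t.val else 1 - p t.val) *
        (∏ t ∈ Finset.range T, f t (if h : t < T then z ⟨t, h⟩ else false))
      = ∏ t : Fin T, ((if z t then p t.val else 1 - p t.val) * f t.val (z t)) := by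
    intro z
    rw [Finset.prod_mul_distrib]
    congr 1
    rw [← Fin.prod_univ_eq_prod_range fun t => f t (if h : t < T then z ⟨t, h⟩ else false)]
    exact Finset.prod_congr rfl fun t _ => by rw [dif_pos t.isLt]
  calc (∑ z : Fin T → Bool,
        (∏ t : Fin T, if z t then p t.val else 1 - p t.val) *
          (∏ t ∈ Finset.range T, f t (if h : t < T then z ⟨t, h⟩ else false)))
      = ∑ z : Fin T → Bool, ∏ t : Fin T,
          ((if z t then p t.val else 1 - p t.val) * f t.val (z t)) :=
        Finset.sum_congr rfl fun z _ => key z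
    _ = ∏ t : Fin T, ∑ b : Bool, ((if b then p t.val else 1 - p t.val) * f t.val b) := by
        rw [Finset.prod_univ_sum]
        rw [Fintype.piFinset_univ]
    _ = ∏ t ∈ Finset.range T, (p t * f t true + (1 - p t) * f t false) := by
        rw [← Fin.prod_univ_eq_prod_range fun t => (p t * f t true + (1 - p t) * f t false)]
        exact Finset.prod_congr rfl fun t _ => by rw [Fintype.sum_bool]; simp

lemma exp_prod_subset (T : ℕ) (p : ℝ) (s : Finset ℕ) (hs : s ⊆ Finset.range T)
    (F : ℕ → Bool → ℝ) :
    Exp T (fun _ => p) (fun z => ∏ t ∈ s, F t (z t))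
      = ∏ t ∈ s, (p * F t true + (1 - p) * F t false) := by
  have h1 : Exp T (fun _ => p) (fun z => ∏ t ∈ s, F t (z t))
      = Exp T (fun _ => p)
          (fun z => ∏ t ∈ Finset.range T, (if t ∈ s then F t (z t) else 1)) := by
    apply exp_congr
    intro z
    rw [← Finset.prod_subset hs (fun x _ hx => if_neg hx)]
    exact Finset.prod_congr rfl fun t ht => (if_pos ht).symm
  rw [h1, exp_prod T (fun _ => p) (fun t b => if t ∈ s then F t b else 1)]
  rw [← Finset.prod_subset hs (fun x _ hx => by simp [hx])]
  exact Finset.prod_congr rfl fun t ht => by simp [ht]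

noncomputable def ztilB (p : ℝ) (b : Bool) : ℝ := ((if b then 1 else 0) - p) / (p * (1 - p))

lemma ztil_eq (p : ℝ) (z : ℕ → Bool) (t : ℕ) :
    ztil (fun _ => p) z t = ztilB p (z t) := rfl

section moments
variable {T : ℕ} {p : ℝ}

lemma m1_eq (hp0 : 0 < p) (hp1 : p < 1) : p * ztilB p true + (1 - p) * ztilB p false = 0 := by
  have h0 : p ≠ 0 := ne_of_gt hp0
  have h1 : (1 : ℝ) - p ≠ 0 := by intro h; linarith
  simp only [ztilB, if_pos, if_neg, Bool.false_eq_true, if_false]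
  field_simp
  ring

lemma m2_eq (hp0 : 0 < p) (hp1 : p < 1) : p * ztilB p true ^ 2 + (1 - p) * ztilB p false ^ 2 = (p * (1 - p))⁻¹ := by
  have h0 : p ≠ 0 := ne_of_gt hp0
  have h1 : (1 : ℝ) - p ≠ 0 := by intro h; linarith
  simp only [ztilB, if_pos, if_neg, Bool.false_eq_true, if_false]
  field_simp
  ring

/-- Expectation of a product of ztil's along a list of (distinct-or-not) indices. -/
lemma exp_list (l : List ℕ) (hl : ∀ x ∈ l, x < T) :
    Exp T (fun _ => p) (fun z => (l.map (fun t => ztilB p (z t))).prod)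
      = ∏ t ∈ l.toFinset,
          (p * ztilB p true ^ l.count t + (1 - p) * ztilB p false ^ l.count t) := by
  have hsub : l.toFinset ⊆ Finset.range T := by
    intro x hx
    simp only [List.mem_toFinset] at hx
    exact Finset.mem_range.mpr (hl x hx)
  have h1 : Exp T (fun _ => p) (fun z => (l.map (fun t => ztilB p (z t))).prod)
      = Exp T (fun _ => p) (fun z => ∏ t ∈ l.toFinset, (ztilB p (z t)) ^ l.count t) := by
    apply exp_congr
    intro z
    exact Finset.prod_list_map_count l (fun t => ztilB p (z t))
  rw [h1, exp_prod_subset T p l.toFinset hsub (fun t b => ztilB p b ^ l.count t)]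

lemma exp_list_zero (hp0 : 0 < p) (hp1 : p < 1) (l : List ℕ) (hl : ∀ x ∈ l, x < T) (t : ℕ) (ht : t ∈ l)
    (hc : l.count t = 1) :
    Exp T (fun _ => p) (fun z => (l.map (fun t => ztilB p (z t))).prod) = 0 := by
  rw [exp_list l hl]
  apply Finset.prod_eq_zero (List.mem_toFinset.mpr ht)
  rw [hc, pow_one, pow_one]
  exact m1_eq hp0 hp1

end moments


section concrete
variable {T : ℕ} {p : ℝ}

lemma mom1 (hp0 : 0 < p) (hp1 : p < 1) (a : ℕ) (ha : a < T) :
    Exp T (fun _ => p) (fun z => ztil (fun _ => p) z a) = 0 := by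
  have h := exp_list_zero (T := T) hp0 hp1 [a] (by simpa using ha) a (by simp) (by simp)
  rw [← h]
  exact exp_congr _ _ fun z => by simp [ztil_eq]

lemma mom2 (hp0 : 0 < p) (hp1 : p < 1) (a b : ℕ) (ha : a < T) (hb : b < T) :
    Exp T (fun _ => p) (fun z => ztil (fun _ => p) z a * ztil (fun _ => p) z b)
      = if a = b then (p * (1 - p))⁻¹ else 0 := by
  by_cases hab : a = b
  · subst hab
    rw [if_pos rfl]
    have hcg : Exp T (fun _ => p) (fun z => ztil (fun _ => p) z a * ztil (fun _ => p) z a)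
        = Exp T (fun _ => p) (fun z => (([a, a].map (fun t => ztilB p (z t))).prod)) :=
      exp_congr _ _ fun z => by simp [ztil_eq]
    rw [hcg, exp_list (T := T) (p := p) [a, a] (by simp [ha])]
    rw [show ([a, a] : List ℕ).toFinset = {a} by simp, Finset.prod_singleton,
      show ([a, a] : List ℕ).count a = 2 by
        simp only [List.count_cons, List.count_nil, beq_iff_eq]; split_ifs <;> omega,
      m2_eq hp0 hp1]
  · rw [if_neg hab]
    have h := exp_list_zero (T := T) hp0 hp1 [a, b] (by simp [ha, hb]) a (by simp)
      (by simp only [List.count_cons, List.count_nil, beq_iff_eq]; split_ifs <;> omega)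
    rw [← h]
    exact exp_congr _ _ fun z => by simp [ztil_eq]

lemma mom3 (hp0 : 0 < p) (hp1 : p < 1) (a b c : ℕ) (ha : a < T) (hb : b < T) (hc : c < T)
    (hbc : b ≠ c) :
    Exp T (fun _ => p)
      (fun z => ztil (fun _ => p) z a * (ztil (fun _ => p) z b * ztil (fun _ => p) z c))
      = 0 := by
  have hcg : Exp T (fun _ => p)
      (fun z => ztil (fun _ => p) z a * (ztil (fun _ => p) z b * ztil (fun _ => p) z c))
      = Exp T (fun _ => p) (fun z => (([a, b, c].map (fun t => ztilB p (z t))).prod)) :=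
    exp_congr _ _ fun z => by simp [ztil_eq]
  rw [hcg]
  have hlt : ∀ x ∈ [a, b, c], x < T := by simp; omega
  by_cases hab : a = b
  · exact exp_list_zero hp0 hp1 _ hlt c (by simp)
      (by simp only [List.count_cons, List.count_nil, beq_iff_eq]; split_ifs <;> omega)
  · by_cases hac : a = c
    · exact exp_list_zero hp0 hp1 _ hlt b (by simp)
        (by simp only [List.count_cons, List.count_nil, beq_iff_eq]; split_ifs <;> omega)
    · exact exp_list_zero hp0 hp1 _ hlt a (by simp)
        (by simp only [List.count_cons, List.count_nil, beq_iff_eq]; split_ifs <;> omega)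

lemma mom4 (hp0 : 0 < p) (hp1 : p < 1) (a b c d : ℕ) (ha : a < T) (hc : c < T)
    (hab : b < a) (hcd : d < c) :
    Exp T (fun _ => p)
      (fun z => (ztil (fun _ => p) z a * ztil (fun _ => p) z b)
        * (ztil (fun _ => p) z c * ztil (fun _ => p) z d))
      = if a = c ∧ b = d then ((p * (1 - p))⁻¹) ^ 2 else 0 := by
  have hb : b < T := lt_trans hab ha
  have hd : d < T := lt_trans hcd hc
  have hcg : Exp T (fun _ => p)
      (fun z => (ztil (fun _ => p) z a * ztil (fun _ => p) z b)
        * (ztil (fun _ => p) z c * ztil (fun _ => p) z d))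
      = Exp T (fun _ => p) (fun z => (([a, b, c, d].map (fun t => ztilB p (z t))).prod)) :=
    exp_congr _ _ fun z => by simp [ztil_eq]; ring
  rw [hcg]
  have hlt : ∀ x ∈ [a, b, c, d], x < T := by simp; omega
  by_cases hmain : a = c ∧ b = d
  · obtain ⟨h1, h2⟩ := hmain
    subst h1; subst h2
    rw [if_pos ⟨rfl, rfl⟩]
    rw [exp_list _ hlt]
    have hne : a ≠ b := by omega
    have htf : ([a, b, a, b] : List ℕ).toFinset = {a, b} := by
      ext x; simp; try tauto
    rw [htf, Finset.prod_pair hne]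
    rw [show ([a, b, a, b] : List ℕ).count a = 2 by
        simp only [List.count_cons, List.count_nil, beq_iff_eq]; split_ifs <;> omega,
      show ([a, b, a, b] : List ℕ).count b = 2 by
        simp only [List.count_cons, List.count_nil, beq_iff_eq]; split_ifs <;> omega,
      m2_eq hp0 hp1]
    ring
  · rw [if_neg hmain]
    by_cases hac : a = c
    · have hbd : b ≠ d := fun h => hmain ⟨hac, h⟩
      exact exp_list_zero hp0 hp1 _ hlt b (by simp)
        (by simp only [List.count_cons, List.count_nil, beq_iff_eq]; split_ifs <;> omega)
    · rcases lt_or_gt_of_ne hac with h | h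
      · exact exp_list_zero hp0 hp1 _ hlt c (by simp)
          (by simp only [List.count_cons, List.count_nil, beq_iff_eq]; split_ifs <;> omega)
      · exact exp_list_zero hp0 hp1 _ hlt a (by simp)
          (by simp only [List.count_cons, List.count_nil, beq_iff_eq]; split_ifs <;> omega)

end concrete

lemma var_key (T K k : ℕ) (hKT : K < T) (hk : k ≤ K) {p : ℝ} (hp0 : 0 < p) (hp1 : p < 1)
    (a : ℕ → ℝ) (b : ℕ → ℕ → ℝ) :
    Var T (fun _ => p)
      (fun z => (∑ t ∈ Finset.Ico K T, a t * ztil (fun _ => p) z (t - k))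
        + ∑ q ∈ (Finset.Ico K T).sigma (fun t => Finset.Icc (K + 1) t),
            b q.1 q.2 * (ztil (fun _ => p) z (q.1 - k) * ztil (fun _ => p) z (q.1 - q.2)))
      = (p * (1 - p))⁻¹ * (∑ t ∈ Finset.Ico K T, a t ^ 2)
        + ((p * (1 - p))⁻¹) ^ 2 *
            ∑ q ∈ (Finset.Ico K T).sigma (fun t => Finset.Icc (K + 1) t), b q.1 q.2 ^ 2 := by
  set I := Finset.Ico K T with hI
  set S := I.sigma (fun t => Finset.Icc (K + 1) t) with hS
  have hmemI : ∀ t ∈ I, K ≤ t ∧ t < T := fun t ht => Finset.mem_Ico.mp ht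
  have hmemS : ∀ q ∈ S, (K ≤ q.1 ∧ q.1 < T) ∧ (K + 1 ≤ q.2 ∧ q.2 ≤ q.1) := by
    intro q hq
    have h := Finset.mem_sigma.mp hq
    exact ⟨Finset.mem_Ico.mp h.1, Finset.mem_Icc.mp h.2⟩
  -- mean zero
  have hEA : Exp T (fun _ => p) (fun z => ∑ t ∈ I, a t * ztil (fun _ => p) z (t - k)) = 0 := by
    rw [exp_sum]
    refine Finset.sum_eq_zero fun t ht => ?_
    have h := hmemI t ht
    rw [exp_const_mul, mom1 hp0 hp1 _ (by omega), mul_zero]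
  have hEB : Exp T (fun _ => p)
      (fun z => ∑ q ∈ S, b q.1 q.2 * (ztil (fun _ => p) z (q.1 - k) * ztil (fun _ => p) z (q.1 - q.2))) = 0 := by
    rw [exp_sum]
    refine Finset.sum_eq_zero fun q hq => ?_
    have h := hmemS q hq
    rw [exp_const_mul, mom2 hp0 hp1 _ _ (by omega) (by omega), if_neg (by omega), mul_zero]
  -- squared term
  have key : ∀ z : ℕ → Bool,
      ((∑ t ∈ I, a t * ztil (fun _ => p) z (t - k))
        + ∑ q ∈ S, b q.1 q.2 * (ztil (fun _ => p) z (q.1 - k) * ztil (fun _ => p) z (q.1 - q.2))) ^ 2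
      = (∑ t ∈ I, ∑ t' ∈ I, (a t * a t') * (ztil (fun _ => p) z (t - k) * ztil (fun _ => p) z (t' - k)))
        + ((∑ t ∈ I, ∑ q ∈ S, (a t * b q.1 q.2) *
              (ztil (fun _ => p) z (t - k) * (ztil (fun _ => p) z (q.1 - k) * ztil (fun _ => p) z (q.1 - q.2))))
          + ((∑ q ∈ S, ∑ t ∈ I, (b q.1 q.2 * a t) *
              (ztil (fun _ => p) z (t - k) * (ztil (fun _ => p) z (q.1 - k) * ztil (fun _ => p) z (q.1 - q.2))))
            + ∑ q ∈ S, ∑ q' ∈ S, (b q.1 q.2 * b q'.1 q'.2) *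
              ((ztil (fun _ => p) z (q.1 - k) * ztil (fun _ => p) z (q.1 - q.2))
                * (ztil (fun _ => p) z (q'.1 - k) * ztil (fun _ => p) z (q'.1 - q'.2))))) := by
    intro z
    have e1 := Finset.sum_mul_sum I I (fun t => a t * ztil (fun _ => p) z (t - k))
      (fun t => a t * ztil (fun _ => p) z (t - k))
    have e2 := Finset.sum_mul_sum I S (fun t => a t * ztil (fun _ => p) z (t - k))
      (fun q => b q.1 q.2 * (ztil (fun _ => p) z (q.1 - k) * ztil (fun _ => p) z (q.1 - q.2)))
    have e3 := Finset.sum_mul_sum S I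
      (fun q => b q.1 q.2 * (ztil (fun _ => p) z (q.1 - k) * ztil (fun _ => p) z (q.1 - q.2)))
      (fun t => a t * ztil (fun _ => p) z (t - k))
    have e4 := Finset.sum_mul_sum S S
      (fun q => b q.1 q.2 * (ztil (fun _ => p) z (q.1 - k) * ztil (fun _ => p) z (q.1 - q.2)))
      (fun q => b q.1 q.2 * (ztil (fun _ => p) z (q.1 - k) * ztil (fun _ => p) z (q.1 - q.2)))
    calc ((∑ t ∈ I, a t * ztil (fun _ => p) z (t - k))
        + ∑ q ∈ S, b q.1 q.2 * (ztil (fun _ => p) z (q.1 - k) * ztil (fun _ => p) z (q.1 - q.2))) ^ 2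
        = (∑ t ∈ I, a t * ztil (fun _ => p) z (t - k)) * (∑ t ∈ I, a t * ztil (fun _ => p) z (t - k))
          + ((∑ t ∈ I, a t * ztil (fun _ => p) z (t - k)) *
              (∑ q ∈ S, b q.1 q.2 * (ztil (fun _ => p) z (q.1 - k) * ztil (fun _ => p) z (q.1 - q.2)))
            + ((∑ q ∈ S, b q.1 q.2 * (ztil (fun _ => p) z (q.1 - k) * ztil (fun _ => p) z (q.1 - q.2))) *
                (∑ t ∈ I, a t * ztil (fun _ => p) z (t - k))
              + (∑ q ∈ S, b q.1 q.2 * (ztil (fun _ => p) z (q.1 - k) * ztil (fun _ => p) z (q.1 - q.2))) *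
                (∑ q ∈ S, b q.1 q.2 * (ztil (fun _ => p) z (q.1 - k) * ztil (fun _ => p) z (q.1 - q.2))))) := by
          ring
      _ = _ := by
          rw [e1, e2, e3, e4]
          congr 1
          · exact Finset.sum_congr rfl fun t _ => Finset.sum_congr rfl fun t' _ => by ring
          congr 1
          · exact Finset.sum_congr rfl fun t _ => Finset.sum_congr rfl fun q _ => by ring
          congr 1
          · exact Finset.sum_congr rfl fun q _ => Finset.sum_congr rfl fun t _ => by ring
          · exact Finset.sum_congr rfl fun q _ => Finset.sum_congr rfl fun q' _ => by ring
  -- compute the four expectations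
  have hT1 : Exp T (fun _ => p)
      (fun z => ∑ t ∈ I, ∑ t' ∈ I, (a t * a t') * (ztil (fun _ => p) z (t - k) * ztil (fun _ => p) z (t' - k)))
      = (p * (1 - p))⁻¹ * ∑ t ∈ I, a t ^ 2 := by
    rw [exp_sum]
    rw [Finset.mul_sum]
    refine Finset.sum_congr rfl fun t ht => ?_
    have hmt := hmemI t ht
    rw [exp_sum]
    have step : ∀ t' ∈ I, Exp T (fun _ => p)
        (fun z => (a t * a t') * (ztil (fun _ => p) z (t - k) * ztil (fun _ => p) z (t' - k)))
        = if t' = t then (a t * a t') * (p * (1 - p))⁻¹ else 0 := by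
      intro t' ht'
      have hmt' := hmemI t' ht'
      rw [exp_const_mul, mom2 hp0 hp1 _ _ (by omega) (by omega)]
      rw [mul_ite, mul_zero]
      congr 1
      exact propext (by constructor <;> (intro h; omega))
    rw [Finset.sum_congr rfl step, Finset.sum_ite_eq' I t
      (fun t' => (a t * a t') * (p * (1 - p))⁻¹), if_pos ht]
    ring
  have hT2 : Exp T (fun _ => p)
      (fun z => ∑ t ∈ I, ∑ q ∈ S, (a t * b q.1 q.2) *
          (ztil (fun _ => p) z (t - k) * (ztil (fun _ => p) z (q.1 - k) * ztil (fun _ => p) z (q.1 - q.2))))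
      = 0 := by
    rw [exp_sum]
    refine Finset.sum_eq_zero fun t ht => ?_
    rw [exp_sum]
    refine Finset.sum_eq_zero fun q hq => ?_
    have hmt := hmemI t ht
    have hmq := hmemS q hq
    rw [exp_const_mul, mom3 hp0 hp1 _ _ _ (by omega) (by omega) (by omega) (by omega), mul_zero]
  have hT3 : Exp T (fun _ => p)
      (fun z => ∑ q ∈ S, ∑ t ∈ I, (b q.1 q.2 * a t) *
          (ztil (fun _ => p) z (t - k) * (ztil (fun _ => p) z (q.1 - k) * ztil (fun _ => p) z (q.1 - q.2))))
      = 0 := by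
    rw [exp_sum]
    refine Finset.sum_eq_zero fun q hq => ?_
    rw [exp_sum]
    refine Finset.sum_eq_zero fun t ht => ?_
    have hmt := hmemI t ht
    have hmq := hmemS q hq
    rw [exp_const_mul, mom3 hp0 hp1 _ _ _ (by omega) (by omega) (by omega) (by omega), mul_zero]
  have hT4 : Exp T (fun _ => p)
      (fun z => ∑ q ∈ S, ∑ q' ∈ S, (b q.1 q.2 * b q'.1 q'.2) *
          ((ztil (fun _ => p) z (q.1 - k) * ztil (fun _ => p) z (q.1 - q.2))
            * (ztil (fun _ => p) z (q'.1 - k) * ztil (fun _ => p) z (q'.1 - q'.2))))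
      = ((p * (1 - p))⁻¹) ^ 2 * ∑ q ∈ S, b q.1 q.2 ^ 2 := by
    rw [exp_sum]
    rw [Finset.mul_sum]
    refine Finset.sum_congr rfl fun q hq => ?_
    have hmq := hmemS q hq
    rw [exp_sum]
    have step : ∀ q' ∈ S, Exp T (fun _ => p)
        (fun z => (b q.1 q.2 * b q'.1 q'.2) *
          ((ztil (fun _ => p) z (q.1 - k) * ztil (fun _ => p) z (q.1 - q.2))
            * (ztil (fun _ => p) z (q'.1 - k) * ztil (fun _ => p) z (q'.1 - q'.2))))
        = if q' = q then (b q.1 q.2 * b q'.1 q'.2) * ((p * (1 - p))⁻¹) ^ 2 else 0 := by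
      intro q' hq'
      have hmq' := hmemS q' hq'
      rw [exp_const_mul, mom4 hp0 hp1 _ _ _ _ (by omega) (by omega) (by omega) (by omega)]
      rw [mul_ite, mul_zero]
      congr 1
      refine propext ⟨fun h => ?_, fun h => ?_⟩
      · obtain ⟨h1, h2⟩ := h
        have e1 : q'.1 = q.1 := by omega
        have e2 : q'.2 = q.2 := by omega
        exact Sigma.ext e1 (heq_of_eq e2)
      · subst h; exact ⟨rfl, rfl⟩
    rw [Finset.sum_congr rfl step, Finset.sum_ite_eq' S q
      (fun q' => (b q.1 q.2 * b q'.1 q'.2) * ((p * (1 - p))⁻¹) ^ 2), if_pos hq]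
    ring
  -- assemble
  rw [Var]
  have hEg : Exp T (fun _ => p)
      (fun z => (∑ t ∈ I, a t * ztil (fun _ => p) z (t - k))
        + ∑ q ∈ S, b q.1 q.2 * (ztil (fun _ => p) z (q.1 - k) * ztil (fun _ => p) z (q.1 - q.2))) = 0 := by
    rw [exp_add, hEA, hEB, add_zero]
  rw [hEg]
  have hsq : Exp T (fun _ => p)
      (fun z => ((∑ t ∈ I, a t * ztil (fun _ => p) z (t - k))
        + ∑ q ∈ S, b q.1 q.2 * (ztil (fun _ => p) z (q.1 - k) * ztil (fun _ => p) z (q.1 - q.2))) ^ 2)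
      = (p * (1 - p))⁻¹ * (∑ t ∈ I, a t ^ 2) + ((p * (1 - p))⁻¹) ^ 2 * ∑ q ∈ S, b q.1 q.2 ^ 2 := by
    rw [exp_congr _ _ key, exp_add, exp_add, exp_add, hT1, hT2, hT3, hT4]
    ring
  rw [hsq]
  ring

/-- (Full OLS variance) Under the linear model `Y_t = Σ_{j=0}^{t} β_j Z_{t-j} + ε_t`
with i.i.d. Bernoulli(p) treatments and nonrandom errors (so `w_ℓ = p(1-p)` and
`τ_ℓ = β_ℓ`), the normalized variance of the full OLS score at lag `k` equals
`(T-K)⁻¹ Σ_t Σ_{ℓ=K+1}^{t} β_ℓ² + (T-K)⁻¹ (p(1-p))⁻¹ Σ_t (p Σ_{j=0}^{t} β_j + ε_t)²`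
(times are indexed `0,...,T-1`, `t` runs over `K,...,T-1`). -/
theorem stmt9 (T K k : ℕ) (hKT : K < T) (hk : k ≤ K)
    (p : ℝ) (hp0 : 0 < p) (hp1 : p < 1)
    (β : ℕ → ℝ) (ε : ℕ → ℝ)
    (Y : ℕ → (ℕ → Bool) → ℝ)
    (hY : ∀ t (z : ℕ → Bool),
      Y t z = (∑ j ∈ Finset.range (t + 1), β j * (if z (t - j) then 1 else 0)) + ε t) :
    (T - K : ℝ)⁻¹ * Var T (fun _ => p) (fun z => ∑ t ∈ Finset.Ico K T,
        ztil (fun _ => p) z (t - k) *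
          (Y t z - ∑ l ∈ Finset.range (K + 1),
            ztil (fun _ => p) z (t - l) * (p * (1 - p)) * β l))
      = (T - K : ℝ)⁻¹ * (∑ t ∈ Finset.Ico K T, ∑ l ∈ Finset.Icc (K + 1) t, (β l) ^ 2)
        + (T - K : ℝ)⁻¹ * (p * (1 - p))⁻¹ *
          ∑ t ∈ Finset.Ico K T, (p * (∑ j ∈ Finset.range (t + 1), β j) + ε t) ^ 2 := by
  have hw : p * (1 - p) ≠ 0 := mul_ne_zero (ne_of_gt hp0) (by linarith)
  have hZ : ∀ (z : ℕ → Bool) (s : ℕ),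
      (if z s then (1 : ℝ) else 0) = p + (p * (1 - p)) * ztil (fun _ => p) z s := by
    intro z s
    rw [ztil, mul_comm (p * (1 - p)), div_mul_cancel₀ _ hw]
    ring
  -- rewrite the bracket
  have hbr : ∀ (z : ℕ → Bool), ∀ t ∈ Finset.Ico K T,
      Y t z - ∑ l ∈ Finset.range (K + 1), ztil (fun _ => p) z (t - l) * (p * (1 - p)) * β l
      = (p * (∑ j ∈ Finset.range (t + 1), β j) + ε t)
        + ∑ j ∈ Finset.Icc (K + 1) t, (p * (1 - p)) * β j * ztil (fun _ => p) z (t - j) := by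
    intro z t ht
    obtain ⟨hKt, htT⟩ := Finset.mem_Ico.mp ht
    have hsum : ∀ F : ℕ → ℝ, ∑ j ∈ Finset.range (t + 1), F j
        = ∑ j ∈ Finset.range (K + 1), F j + ∑ j ∈ Finset.Icc (K + 1) t, F j := by
      intro F
      rw [Finset.range_eq_Ico, Finset.range_eq_Ico, ← Finset.Ico_add_one_right_eq_Icc]
      exact (Finset.sum_Ico_consecutive F (m := 0) (n := K + 1) (k := t + 1) (Nat.zero_le _) (by omega)).symm
    rw [hY]
    have h1 : ∑ j ∈ Finset.range (t + 1), β j * (if z (t - j) then (1 : ℝ) else 0)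
        = ∑ j ∈ Finset.range (t + 1),
            (β j * p + β j * ((p * (1 - p)) * ztil (fun _ => p) z (t - j))) :=
      Finset.sum_congr rfl fun j _ => by rw [hZ]; ring
    rw [h1, Finset.sum_add_distrib,
      hsum (fun j => β j * ((p * (1 - p)) * ztil (fun _ => p) z (t - j)))]
    have h2 : ∑ j ∈ Finset.range (t + 1), β j * p = p * ∑ j ∈ Finset.range (t + 1), β j := by
      rw [Finset.mul_sum]
      exact Finset.sum_congr rfl fun j _ => by ring
    have h3 : ∑ l ∈ Finset.range (K + 1), ztil (fun _ => p) z (t - l) * (p * (1 - p)) * β l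
        = ∑ j ∈ Finset.range (K + 1), β j * ((p * (1 - p)) * ztil (fun _ => p) z (t - j)) :=
      Finset.sum_congr rfl fun j _ => by ring
    have h4 : ∑ j ∈ Finset.Icc (K + 1) t, β j * ((p * (1 - p)) * ztil (fun _ => p) z (t - j))
        = ∑ j ∈ Finset.Icc (K + 1) t, (p * (1 - p)) * β j * ztil (fun _ => p) z (t - j) :=
      Finset.sum_congr rfl fun j _ => by ring
    rw [h2, h3, h4]
    ring
  -- pointwise form of the score
  have hsc : ∀ z : ℕ → Bool,
      (∑ t ∈ Finset.Ico K T, ztil (fun _ => p) z (t - k) *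
        (Y t z - ∑ l ∈ Finset.range (K + 1), ztil (fun _ => p) z (t - l) * (p * (1 - p)) * β l))
      = (∑ t ∈ Finset.Ico K T,
          (p * (∑ j ∈ Finset.range (t + 1), β j) + ε t) * ztil (fun _ => p) z (t - k))
        + ∑ q ∈ (Finset.Ico K T).sigma (fun t => Finset.Icc (K + 1) t),
            ((p * (1 - p)) * β q.2) *
              (ztil (fun _ => p) z (q.1 - k) * ztil (fun _ => p) z (q.1 - q.2)) := by
    intro z
    rw [Finset.sum_sigma, ← Finset.sum_add_distrib]
    refine Finset.sum_congr rfl fun t ht => ?_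
    rw [hbr z t ht, mul_add]
    congr 1
    · ring
    · rw [Finset.mul_sum]
      exact Finset.sum_congr rfl fun j _ => by ring
  -- replace the functional inside Var
  have hvc : Var T (fun _ => p) (fun z => ∑ t ∈ Finset.Ico K T,
        ztil (fun _ => p) z (t - k) *
          (Y t z - ∑ l ∈ Finset.range (K + 1),
            ztil (fun _ => p) z (t - l) * (p * (1 - p)) * β l))
      = Var T (fun _ => p)
        (fun z => (∑ t ∈ Finset.Ico K T,
            (p * (∑ j ∈ Finset.range (t + 1), β j) + ε t) * ztil (fun _ => p) z (t - k))
          + ∑ q ∈ (Finset.Ico K T).sigma (fun t => Finset.Icc (K + 1) t),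
              ((p * (1 - p)) * β q.2) *
                (ztil (fun _ => p) z (q.1 - k) * ztil (fun _ => p) z (q.1 - q.2))) := by
    rw [Var, Var, exp_congr _ _ hsc, exp_congr _ _ (fun z => by rw [hsc z])]
  rw [hvc,
    var_key T K k hKT hk hp0 hp1
      (fun t => p * (∑ j ∈ Finset.range (t + 1), β j) + ε t)
      (fun t j => (p * (1 - p)) * β j)]
  have hb2 : ∑ q ∈ (Finset.Ico K T).sigma (fun t => Finset.Icc (K + 1) t),
        ((p * (1 - p)) * β q.2) ^ 2
      = (p * (1 - p)) ^ 2 * ∑ q ∈ (Finset.Ico K T).sigma (fun t => Finset.Icc (K + 1) t),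
          β q.2 ^ 2 := by
    rw [Finset.mul_sum]
    exact Finset.sum_congr rfl fun q _ => by ring
  have hsig : ∑ q ∈ (Finset.Ico K T).sigma (fun t => Finset.Icc (K + 1) t), β q.2 ^ 2
      = ∑ t ∈ Finset.Ico K T, ∑ l ∈ Finset.Icc (K + 1) t, β l ^ 2 := by
    rw [Finset.sum_sigma]
  rw [hb2, hsig]
  have hvw : ((p * (1 - p))⁻¹) ^ 2 * (p * (1 - p)) ^ 2 = 1 := by
    have h1p : (1 : ℝ) - p ≠ 0 := by intro h; linarith
    field_simp
  rw [← mul_assoc, hvw, one_mul]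
  ring
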